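/- Let P̃, V, U, Q be complex square matrices indexed by Fin M with P̃ = V Λ Uᴴ, where Λ is the diagonal matrix with diagonal entries λ_1, …, λ_M, Uᴴ V = I, λ_1 = 1, the first column of V is the all-ones vector, the first row of Uᴴ is the row vector π, and |λ_m| < 1 for all m ≥ 2. Set μ = π Q 𝟙, α = π Q V, β = Uᴴ Q 𝟙, and γ_l = π Q P̃^{l−1} Q 𝟙 − μ² for l ≥ 1. Then for every L ∈ ℕ, the tail series Σ_{l=L+1}^∞ γ_l converges with sum Σ_{m=2}^{M} α_m β_m λ_m^{L} / (1 − λ_m); equivalently, Σ_{l=1}^∞ γ_l = Σ_{l=1}^{L} γ_l + Σ_{m=2}^{M} α_m β_m λ_m^{L} / (1 − λ_m). -/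

import Mathlib

open Matrix
open scoped BigOperators

/-- **Proposition 1 (spectral truncation rule), exact full-rank form.**
Under the spectral decomposition of `Pt` with leading eigentriple `(1, 𝟙, π)` and
subdominant eigenvalues strictly inside the unit disc, for every `L` the tail series
`∑_{l=L+1}^∞ γ_l` converges to `∑_{m=2}^{M} α_m β_m λ_m^L / (1 − λ_m)`, where
`γ_l = π Q Pt^{l-1} Q 𝟙 − μ²`; equivalently,
`∑_{l=1}^∞ γ_l = ∑_{l=1}^{L} γ_l + ∑_{m=2}^{M} α_m β_m λ_m^L / (1 − λ_m)`. -/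
theorem spectral_truncation_rule
    {M : ℕ} [NeZero M]
    (Pt V U Q : Matrix (Fin M) (Fin M) ℂ) (lam : Fin M → ℂ) (π : Fin M → ℂ)
    (hdecomp : Pt = V * Matrix.diagonal lam * Uᴴ)
    (hbiorth : Uᴴ * V = 1)
    (hlam1 : lam 0 = 1)
    (hV1 : ∀ i, V i 0 = 1)
    (hU1 : ∀ j, Uᴴ 0 j = π j)
    (hsub : ∀ m : Fin M, m ≠ 0 → ‖lam m‖ < 1)
    (μ : ℂ) (hμ : μ = π ⬝ᵥ Q.mulVec (fun _ => 1))
    (α : Fin M → ℂ) (hα : α = Matrix.vecMul (Matrix.vecMul π Q) V)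
    (β : Fin M → ℂ) (hβ : β = Matrix.mulVec (Uᴴ * Q) (fun _ => 1))
    (L : ℕ) :
    HasSum
      (fun l : ℕ => π ⬝ᵥ (Q * Pt ^ (L + l) * Q).mulVec (fun _ => 1) - μ ^ 2)
      (∑ m ∈ Finset.univ.erase (0 : Fin M), α m * β m * lam m ^ L / (1 - lam m)) ∧
    (∑' l : ℕ, (π ⬝ᵥ (Q * Pt ^ l * Q).mulVec (fun _ => 1) - μ ^ 2)) =
      (∑ l ∈ Finset.range L, (π ⬝ᵥ (Q * Pt ^ l * Q).mulVec (fun _ => 1) - μ ^ 2)) +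
        ∑ m ∈ Finset.univ.erase (0 : Fin M), α m * β m * lam m ^ L / (1 - lam m) := by
  classical
  have hVU : V * Uᴴ = 1 := mul_eq_one_comm.mp hbiorth
  have hpow : ∀ n : ℕ, Pt ^ n = V * Matrix.diagonal (fun m => lam m ^ n) * Uᴴ := by
    intro n
    induction n with
    | zero => simp [pow_zero, hVU]
    | succ k ih =>
        rw [pow_succ, ih, hdecomp,
          Matrix.mul_assoc (V * Matrix.diagonal fun m => lam m ^ k) Uᴴ
            (V * Matrix.diagonal lam * Uᴴ),
          ← Matrix.mul_assoc Uᴴ (V * Matrix.diagonal lam) Uᴴ,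
          ← Matrix.mul_assoc Uᴴ V (Matrix.diagonal lam), hbiorth, Matrix.one_mul,
          ← Matrix.mul_assoc (V * Matrix.diagonal fun m => lam m ^ k)
            (Matrix.diagonal lam) Uᴴ,
          Matrix.mul_assoc V (Matrix.diagonal fun m => lam m ^ k) (Matrix.diagonal lam),
          Matrix.diagonal_mul_diagonal]
        simp [pow_succ]
  have key : ∀ n : ℕ, π ⬝ᵥ (Q * Pt ^ n * Q).mulVec (fun _ => 1)
      = ∑ m, α m * β m * lam m ^ n := by
    intro n
    rw [hpow n, hα, hβ]
    have h1 : Q * (V * Matrix.diagonal (fun m => lam m ^ n) * Uᴴ) * Q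
        = (Q * V) * Matrix.diagonal (fun m => lam m ^ n) * (Uᴴ * Q) := by
      noncomm_ring
    rw [h1]
    rw [show ((Q * V) * Matrix.diagonal (fun m => lam m ^ n) * (Uᴴ * Q)).mulVec
          (fun _ => (1:ℂ))
        = (Q * V).mulVec ((Matrix.diagonal (fun m => lam m ^ n)).mulVec
            ((Uᴴ * Q).mulVec (fun _ => 1))) by
      rw [Matrix.mulVec_mulVec, Matrix.mulVec_mulVec]]
    rw [Matrix.dotProduct_mulVec, ← Matrix.vecMul_vecMul]
    simp only [dotProduct, Matrix.mulVec_diagonal]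
    exact Finset.sum_congr rfl fun x _ => by ring
  have hμα : α 0 = μ := by
    rw [hα, hμ]
    simp only [Matrix.vecMul, dotProduct, Matrix.mulVec, hV1, mul_one]
    rw [Finset.sum_comm]
    simp [Finset.mul_sum, mul_comm]
  have hμβ : β 0 = μ := by
    rw [hβ, hμ]
    simp only [Matrix.mulVec, dotProduct, Matrix.mul_apply, hU1, mul_one]
    rw [Finset.sum_comm]
    simp [Finset.mul_sum, mul_comm]
  have hterm : ∀ n : ℕ, π ⬝ᵥ (Q * Pt ^ n * Q).mulVec (fun _ => 1) - μ ^ 2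
      = ∑ m ∈ Finset.univ.erase (0 : Fin M), α m * β m * lam m ^ n := by
    intro n
    rw [key n, ← Finset.add_sum_erase _ _ (Finset.mem_univ (0 : Fin M)),
      hμα, hμβ, hlam1, one_pow, mul_one, ← sq]
    ring
  have hmain : ∀ K : ℕ, HasSum
      (fun l : ℕ => π ⬝ᵥ (Q * Pt ^ (K + l) * Q).mulVec (fun _ => 1) - μ ^ 2)
      (∑ m ∈ Finset.univ.erase (0 : Fin M), α m * β m * lam m ^ K / (1 - lam m)) := by
    intro K
    have h : HasSum
        (fun l : ℕ => ∑ m ∈ Finset.univ.erase (0 : Fin M),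
          α m * β m * lam m ^ (K + l))
        (∑ m ∈ Finset.univ.erase (0 : Fin M), α m * β m * lam m ^ K / (1 - lam m)) := by
      refine hasSum_sum fun m hm => ?_
      have hm0 : m ≠ 0 := (Finset.mem_erase.mp hm).1
      have hnorm : ‖lam m‖ < 1 := by
        exact hsub m hm0
      have hg := (hasSum_geometric_of_norm_lt_one hnorm).mul_left
        (α m * β m * lam m ^ K)
      have hfun : (fun l : ℕ => α m * β m * lam m ^ (K + l))
          = fun l : ℕ => (α m * β m * lam m ^ K) * lam m ^ l := by
        funext l; rw [pow_add]; ring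
      rw [hfun, div_eq_mul_inv]
      exact hg
    exact h.congr_fun fun l => hterm (K + l)
  constructor
  · exact hmain L
  · have hsummable : Summable
        (fun l : ℕ => π ⬝ᵥ (Q * Pt ^ l * Q).mulVec (fun _ => 1) - μ ^ 2) := by
      have := (hmain 0).summable
      simpa using this
    rw [← hsummable.sum_add_tsum_nat_add L]
    congr 1
    have h2 : HasSum
        (fun l : ℕ => π ⬝ᵥ (Q * Pt ^ (l + L) * Q).mulVec (fun _ => 1) - μ ^ 2)
        (∑ m ∈ Finset.univ.erase (0 : Fin M), α m * β m * lam m ^ L / (1 - lam m)) := by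
      refine (hmain L).congr_fun fun l => ?_
      rw [Nat.add_comm]
    exact h2.tsum_eq
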